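/- For δ > 0, define g_δ : ℝ² → ℝ by g_δ(x,y) := |y| · 1_{{|x| < δ}}. For z ∈ ℝ² and λ > 0, let ω_{g_δ}(z : λ) := sup_{w ∈ B(z,λ)} g_δ(w) − inf_{w ∈ B(z,λ)} g_δ(w), where B(z,λ) is the closed ball of radius λ centered at z for the sup norm ‖·‖_∞ on ℝ². Let Φ denote the standard Gaussian measure on ℝ² and set ω̄_{g_δ}(ε : Φ) := ∫_{ℝ²} ω_{g_δ}(z : ε) dΦ(z). Then there exists an absolute constant C > 0, independent of δ, such that for all 0 < ε ≤ 1, ω̄_{g_δ}(ε : Φ) ≤ C ε. -/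

import Mathlib

open MeasureTheory Real

/-- The function `g_δ(x,y) = |y| · 1_{|x| < δ}` on `ℝ²`. -/
noncomputable def gdelta (δ : ℝ) (w : ℝ × ℝ) : ℝ := if |w.1| < δ then |w.2| else 0

/-- The oscillation of `g_δ` on the closed ball (for the sup norm on `ℝ²`) of radius `lam`
centered at `z`. -/
noncomputable def oscg (δ : ℝ) (z : ℝ × ℝ) (lam : ℝ) : ℝ :=
  sSup (gdelta δ '' Metric.closedBall z lam) - sInf (gdelta δ '' Metric.closedBall z lam)

/-- The standard Gaussian measure on `ℝ²`. -/
noncomputable def stdGauss2 : Measure (ℝ × ℝ) :=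
  volume.withDensity fun z => ENNReal.ofReal ((2 * π)⁻¹ * Real.exp (-(z.1 ^ 2 + z.2 ^ 2) / 2))

section auxST15

open ENNReal NNReal Filter

noncomputable def gphi : ℝ → ℝ := fun x => Real.exp (-x ^ 2 / 2)
noncomputable def gpsi : ℝ → ℝ := fun y => (|y| + 1) * Real.exp (-y ^ 2 / 2)
noncomputable def rdens : ℝ × ℝ → ℝ := fun z => (2 * π)⁻¹ * Real.exp (-(z.1 ^ 2 + z.2 ^ 2) / 2)

lemma rdens_nonneg (z : ℝ × ℝ) : 0 ≤ rdens z := by unfold rdens; positivity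

lemma stdGauss2_eq :
    stdGauss2 = volume.withDensity
      (fun z => ((fun z : ℝ × ℝ => (rdens z).toNNReal) z : ℝ≥0∞)) := rfl

lemma rdens_meas : Measurable fun z : ℝ × ℝ => (rdens z).toNNReal := by
  have : Continuous rdens := by unfold rdens; continuity
  exact this.measurable.real_toNNReal

lemma rdens_factor (z : ℝ × ℝ) : rdens z = (2 * π)⁻¹ * gphi z.1 * gphi z.2 := by
  unfold rdens gphi
  rw [show -(z.1 ^ 2 + z.2 ^ 2) / 2 = -z.1 ^ 2 / 2 + -z.2 ^ 2 / 2 by ring, Real.exp_add]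
  ring

lemma chi_meas (δ ε : ℝ) :
    Measurable fun x : ℝ => (if δ - ε ≤ |x| ∧ |x| ≤ δ + ε then (1:ℝ) else 0) * gphi x := by
  apply Measurable.mul
  · apply Measurable.ite _ measurable_const measurable_const
    have : {x : ℝ | δ - ε ≤ |x| ∧ |x| ≤ δ + ε}
        = {x : ℝ | δ - ε ≤ |x|} ∩ {x : ℝ | |x| ≤ δ + ε} := rfl
    rw [this]
    exact (measurableSet_le measurable_const measurable_abs).inter
      (measurableSet_le measurable_abs measurable_const)
  · exact (by unfold gphi; continuity : Continuous gphi).measurable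

lemma gphi_le_one (x : ℝ) : gphi x ≤ 1 := by
  unfold gphi
  rw [Real.exp_le_one_iff]
  nlinarith [sq_nonneg x]

lemma gphi_nonneg (x : ℝ) : 0 ≤ gphi x := le_of_lt (Real.exp_pos _)

lemma gphi_integrable : Integrable gphi := by
  have h := integrable_exp_neg_mul_sq (by norm_num : (0:ℝ) < 1/2)
  refine h.congr (Filter.Eventually.of_forall fun x => ?_)
  unfold gphi; ring_nf

lemma chi_integrable (δ ε : ℝ) :
    Integrable fun x : ℝ => (if δ - ε ≤ |x| ∧ |x| ≤ δ + ε then (1:ℝ) else 0) * gphi x := by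
  apply gphi_integrable.mono (chi_meas δ ε).aestronglyMeasurable
  refine Filter.Eventually.of_forall fun x => ?_
  rw [Real.norm_eq_abs, Real.norm_eq_abs, abs_of_nonneg (gphi_nonneg x)]
  split_ifs with h
  · rw [one_mul, abs_of_nonneg (gphi_nonneg x)]
  · rw [zero_mul, abs_zero]; exact gphi_nonneg x

lemma chi_nonneg (δ ε : ℝ) (x : ℝ) :
    0 ≤ (if δ - ε ≤ |x| ∧ |x| ≤ δ + ε then (1:ℝ) else 0) * gphi x := by
  split_ifs <;> simp [gphi_nonneg x]

lemma chi_integral_le (δ ε : ℝ) (hε : 0 < ε) :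
    ∫ x, (if δ - ε ≤ |x| ∧ |x| ≤ δ + ε then (1:ℝ) else 0) * gphi x ≤ 4 * ε := by
  set I1 : Set ℝ := Set.Icc (δ - ε) (δ + ε) with hI1
  set I2 : Set ℝ := Set.Icc (-(δ + ε)) (-(δ - ε)) with hI2
  have hint1 : Integrable (I1.indicator fun _ => (1:ℝ)) :=
    (integrable_indicator_iff measurableSet_Icc).2
      (integrableOn_const measure_Icc_lt_top.ne)
  have hint2 : Integrable (I2.indicator fun _ => (1:ℝ)) :=
    (integrable_indicator_iff measurableSet_Icc).2
      (integrableOn_const measure_Icc_lt_top.ne)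
  have hptw : ∀ x : ℝ, (if δ - ε ≤ |x| ∧ |x| ≤ δ + ε then (1:ℝ) else 0) * gphi x
      ≤ I1.indicator (fun _ => (1:ℝ)) x + I2.indicator (fun _ => (1:ℝ)) x := by
    intro x
    have h1 : (0:ℝ) ≤ I1.indicator (fun _ => (1:ℝ)) x :=
      Set.indicator_nonneg (fun _ _ => zero_le_one) x
    have h2 : (0:ℝ) ≤ I2.indicator (fun _ => (1:ℝ)) x :=
      Set.indicator_nonneg (fun _ _ => zero_le_one) x
    split_ifs with h
    · rw [one_mul]
      rcases le_or_gt 0 x with hx | hx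
      · have hmem : x ∈ I1 := by
          rw [hI1, Set.mem_Icc]
          rw [abs_of_nonneg hx] at h
          exact h
        rw [Set.indicator_of_mem hmem]
        linarith [gphi_le_one x]
      · have hmem : x ∈ I2 := by
          rw [hI2, Set.mem_Icc]
          rw [abs_of_neg hx] at h
          constructor <;> linarith [h.1, h.2]
        rw [Set.indicator_of_mem hmem]
        linarith [gphi_le_one x]
    · rw [zero_mul]; linarith
  have hI1v : ∫ x, I1.indicator (fun _ => (1:ℝ)) x = 2 * ε := by
    rw [integral_indicator_const (1:ℝ) measurableSet_Icc, measureReal_def, Real.volume_Icc,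
      show δ + ε - (δ - ε) = 2 * ε by ring, ENNReal.toReal_ofReal (by linarith), smul_eq_mul,
      mul_one]
  have hI2v : ∫ x, I2.indicator (fun _ => (1:ℝ)) x = 2 * ε := by
    rw [integral_indicator_const (1:ℝ) measurableSet_Icc, measureReal_def, Real.volume_Icc,
      show -(δ - ε) - -(δ + ε) = 2 * ε by ring, ENNReal.toReal_ofReal (by linarith), smul_eq_mul,
      mul_one]
  calc ∫ x, (if δ - ε ≤ |x| ∧ |x| ≤ δ + ε then (1:ℝ) else 0) * gphi x
      ≤ ∫ x, (I1.indicator (fun _ => (1:ℝ)) x + I2.indicator (fun _ => (1:ℝ)) x) :=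
        integral_mono (chi_integrable δ ε) (hint1.add hint2) hptw
    _ = (∫ x, I1.indicator (fun _ => (1:ℝ)) x) + ∫ x, I2.indicator (fun _ => (1:ℝ)) x :=
        integral_add hint1 hint2
    _ = 4 * ε := by rw [hI1v, hI2v]; ring

lemma gphi_integral : ∫ x, gphi x = Real.sqrt (2 * π) := by
  have h := integral_gaussian (1/2 : ℝ)
  have e : ∀ x : ℝ, Real.exp (-(1/2 : ℝ) * x ^ 2) = gphi x := by
    intro x; unfold gphi; ring_nf
  rw [show (π / (1/2 : ℝ)) = 2 * π by ring] at h
  rw [← h]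
  apply congrArg
  funext x
  rw [e x]

lemma gpsi_le (y : ℝ) : gpsi y ≤ 2 * Real.exp (-y ^ 2 / 4) := by
  unfold gpsi
  have h1 : |y| + 1 ≤ 2 * Real.exp (y ^ 2 / 4) := by
    have := Real.add_one_le_exp (y ^ 2 / 4)
    nlinarith [sq_abs y, sq_nonneg (|y| - 1), Real.exp_pos (y^2/4)]
  have h2 : (0:ℝ) < Real.exp (-y ^ 2 / 2) := Real.exp_pos _
  calc (|y| + 1) * Real.exp (-y ^ 2 / 2) ≤ (2 * Real.exp (y ^ 2 / 4)) * Real.exp (-y ^ 2 / 2) :=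
        mul_le_mul_of_nonneg_right h1 h2.le
    _ = 2 * Real.exp (-y ^ 2 / 4) := by
        rw [mul_assoc, ← Real.exp_add]; ring_nf

lemma gauss4_integrable : Integrable (fun y : ℝ => 2 * Real.exp (-y ^ 2 / 4)) := by
  have h := (integrable_exp_neg_mul_sq (by norm_num : (0:ℝ) < 1/4)).const_mul 2
  refine h.congr (Filter.Eventually.of_forall fun x => ?_)
  ring_nf

lemma gpsi_nonneg (y : ℝ) : 0 ≤ gpsi y := by unfold gpsi; positivity

lemma gpsi_integrable : Integrable gpsi := by
  apply gauss4_integrable.mono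
  · exact (Continuous.mul (by continuity) (by continuity)).aestronglyMeasurable
  · refine Filter.Eventually.of_forall fun y => ?_
    have h2 : (0:ℝ) ≤ 2 * Real.exp (-y ^ 2 / 4) := by positivity
    rw [Real.norm_eq_abs, Real.norm_eq_abs, abs_of_nonneg (gpsi_nonneg y), abs_of_nonneg h2]
    exact gpsi_le y

lemma gpsi_integral_le : ∫ y, gpsi y ≤ 4 * Real.sqrt π := by
  have h4 : ∫ y : ℝ, 2 * Real.exp (-y ^ 2 / 4) = 2 * Real.sqrt (4 * π) := by
    rw [integral_const_mul]
    have h := integral_gaussian (1/4 : ℝ)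
    rw [show (π / (1/4 : ℝ)) = 4 * π by ring] at h
    rw [← h]
    have e4 : (fun a : ℝ => Real.exp (-a ^ 2 / 4))
        = (fun x : ℝ => Real.exp (-(1/4:ℝ) * x ^ 2)) := by
      funext x; ring_nf
    rw [e4]
  calc ∫ y, gpsi y ≤ ∫ y : ℝ, 2 * Real.exp (-y ^ 2 / 4) :=
        integral_mono gpsi_integrable gauss4_integrable gpsi_le
    _ = 2 * Real.sqrt (4 * π) := h4
    _ = 4 * Real.sqrt π := by
        rw [show (4 : ℝ) * π = 2 ^ 2 * π by norm_num, Real.sqrt_mul (by positivity),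
          Real.sqrt_sq (by norm_num : (0:ℝ) ≤ 2)]
        ring

lemma oscg_nonneg (δ ε : ℝ) (hε : 0 < ε) (z : ℝ × ℝ) : 0 ≤ oscg δ z ε := by
  unfold oscg
  rw [sub_nonneg]
  have hne : (gdelta δ '' Metric.closedBall z ε).Nonempty :=
    ⟨gdelta δ z, z, Metric.mem_closedBall_self hε.le, rfl⟩
  apply (fun hb ha hne => csInf_le_csSup hne hb ha)
  · refine ⟨0, ?_⟩
    rintro b ⟨w, hw, rfl⟩
    unfold gdelta; split <;> simp [abs_nonneg]
  · refine ⟨|z.2| + ε, ?_⟩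
    rintro b ⟨w, hw, rfl⟩
    rw [Metric.mem_closedBall, Prod.dist_eq, max_le_iff, Real.dist_eq, Real.dist_eq] at hw
    have : gdelta δ w ≤ |w.2| := by unfold gdelta; split <;> simp [abs_nonneg]
    have h2 := abs_sub_abs_le_abs_sub w.2 z.2
    linarith [hw.2]
  · exact hne

lemma oscg_le_B (δ : ℝ) (ε : ℝ) (hε : 0 < ε) (z : ℝ × ℝ) :
    oscg δ z ε ≤ 2 * ε +
      (if δ - ε ≤ |z.1| ∧ |z.1| ≤ δ + ε then (1:ℝ) else 0) * (|z.2| + 1) := by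
  set S := gdelta δ '' Metric.closedBall z ε with hS
  have hne : S.Nonempty := ⟨gdelta δ z, z, Metric.mem_closedBall_self hε.le, rfl⟩
  have hmem : ∀ w ∈ Metric.closedBall z ε, |w.2 - z.2| ≤ ε ∧ |w.1 - z.1| ≤ ε := by
    intro w hw
    rw [Metric.mem_closedBall, Prod.dist_eq, max_le_iff, Real.dist_eq, Real.dist_eq] at hw
    exact ⟨hw.2, hw.1⟩
  have hsup : sSup S ≤ |z.2| + ε := by
    apply csSup_le hne
    rintro b ⟨w, hw, rfl⟩
    have h2 := (hmem w hw).1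
    have : gdelta δ w ≤ |w.2| := by
      unfold gdelta; split <;> simp [abs_nonneg]
    calc gdelta δ w ≤ |w.2| := this
      _ ≤ |z.2| + |w.2 - z.2| := by
          linarith [abs_sub_abs_le_abs_sub w.2 z.2]
      _ ≤ |z.2| + ε := by linarith
  have hinf0 : 0 ≤ sInf S := by
    apply le_csInf hne
    rintro b ⟨w, hw, rfl⟩
    unfold gdelta; split <;> simp [abs_nonneg]
  by_cases hA : δ - ε ≤ |z.1| ∧ |z.1| ≤ δ + ε
  · rw [if_pos hA]
    unfold oscg
    rw [← hS]
    nlinarith [abs_nonneg z.2]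
  · rw [if_neg hA]
    push_neg at hA
    rcases lt_or_ge (|z.1|) (δ - ε) with hin | hout
    · have hval : ∀ w ∈ Metric.closedBall z ε, gdelta δ w = |w.2| := by
        intro w hw
        have h1 := (hmem w hw).2
        have : |w.1| < δ := by
          have := abs_sub_abs_le_abs_sub w.1 z.1
          linarith
        unfold gdelta; rw [if_pos this]
      have hinf : |z.2| - ε ≤ sInf S := by
        apply le_csInf hne
        rintro b ⟨w, hw, rfl⟩
        rw [hval w hw]
        have h2 := (hmem w hw).1
        have := abs_sub_abs_le_abs_sub z.2 w.2
        rw [abs_sub_comm] at this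
        linarith
      unfold oscg; rw [← hS]
      rcases le_or_gt ε (|z.2|) with h | h
      · linarith
      · linarith
    · have hout2 : δ + ε < |z.1| := hA hout
      have hval : ∀ w ∈ Metric.closedBall z ε, gdelta δ w = 0 := by
        intro w hw
        have hx := (hmem w hw).2
        have : ¬ |w.1| < δ := by
          have := abs_sub_abs_le_abs_sub z.1 w.1
          rw [abs_sub_comm] at this
          push_neg
          linarith
        unfold gdelta; rw [if_neg this]
      have hsup0 : sSup S ≤ 0 := by
        apply csSup_le hne
        rintro b ⟨w, hw, rfl⟩
        rw [hval w hw]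
      unfold oscg; rw [← hS]
      linarith

end auxST15

/-- The Gaussian-averaged modulus of continuity of `g_δ` is linear in `ε`, uniformly in `δ`:
there is an absolute constant `C > 0` such that `ω̄_{g_δ}(ε : Φ) ≤ C ε` for all `0 < ε ≤ 1`. -/
theorem statement15 :
    ∃ C > (0 : ℝ), ∀ δ : ℝ, 0 < δ → ∀ ε : ℝ, 0 < ε → ε ≤ 1 →
      ∫ z, oscg δ z ε ∂stdGauss2 ≤ C * ε := by
  refine ⟨10, by norm_num, ?_⟩
  intro δ hδ ε hε hε1
  set B : ℝ × ℝ → ℝ := fun z =>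
    2 * ε + (if δ - ε ≤ |z.1| ∧ |z.1| ≤ δ + ε then (1:ℝ) else 0) * (|z.2| + 1) with hB
  -- the two product-form pieces of rdens * B
  set t1 : ℝ × ℝ → ℝ := fun z => (2 * ε * (2 * π)⁻¹ * gphi z.1) * gphi z.2 with ht1
  set t2 : ℝ × ℝ → ℝ := fun z =>
    ((2 * π)⁻¹ * ((if δ - ε ≤ |z.1| ∧ |z.1| ≤ δ + ε then (1:ℝ) else 0) * gphi z.1)) * gpsi z.2
    with ht2
  have hkey : ∀ z : ℝ × ℝ, rdens z * B z = t1 z + t2 z := by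
    intro z
    rw [rdens_factor z, hB, ht1, ht2]
    unfold gphi gpsi
    ring_nf
  have hvol : (volume : Measure (ℝ × ℝ)) = (volume : Measure ℝ).prod volume :=
    Measure.volume_eq_prod ℝ ℝ
  have hint1 : Integrable t1 (volume : Measure (ℝ × ℝ)) := by
    rw [ht1, hvol]
    exact (gphi_integrable.const_mul (2 * ε * (2 * π)⁻¹)).mul_prod gphi_integrable
  have hint2 : Integrable t2 (volume : Measure (ℝ × ℝ)) := by
    rw [ht2, hvol]
    exact ((chi_integrable δ ε).const_mul ((2 * π)⁻¹)).mul_prod gpsi_integrable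
  have hfeq : (fun z : ℝ × ℝ => (rdens z).toNNReal • B z) = fun z => t1 z + t2 z := by
    funext z
    have : (rdens z).toNNReal • B z = ((rdens z).toNNReal : ℝ) * B z := rfl
    rw [this, Real.coe_toNNReal _ (rdens_nonneg z), hkey z]
  have hBint : Integrable B stdGauss2 := by
    rw [stdGauss2_eq, integrable_withDensity_iff_integrable_smul rdens_meas]
    rw [hfeq]
    exact hint1.add hint2
  have hBeq : ∫ z, B z ∂stdGauss2 = (∫ z, t1 z) + ∫ z, t2 z := by
    rw [stdGauss2_eq, integral_withDensity_eq_integral_smul rdens_meas, hfeq]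
    exact integral_add hint1 hint2
  have hT1 : ∫ z, t1 z = 2 * ε := by
    simp only [ht1]
    rw [hvol]
    refine (integral_prod_mul (μ := (volume : Measure ℝ)) (ν := (volume : Measure ℝ))
      (fun x : ℝ => 2 * ε * (2 * π)⁻¹ * gphi x) gphi).trans ?_
    rw [integral_const_mul, gphi_integral]
    have h2 : Real.sqrt 2 * Real.sqrt 2 = 2 := Real.mul_self_sqrt (by norm_num)
    have hp : Real.sqrt π * Real.sqrt π = π := Real.mul_self_sqrt pi_pos.le
    have hπ : (2 * π) ≠ 0 := by positivity
    field_simp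
    linear_combination Real.sq_sqrt (show (0:ℝ) ≤ 2 * π by positivity)
  have hT2 : ∫ z, t2 z ≤ 8 * ε := by
    simp only [ht2]
    rw [hvol]
    refine le_of_eq_of_le (integral_prod_mul (μ := (volume : Measure ℝ)) (ν := (volume : Measure ℝ))
      (fun x : ℝ => (2 * π)⁻¹ * ((if δ - ε ≤ |x| ∧ |x| ≤ δ + ε then (1:ℝ) else 0) * gphi x))
      gpsi) ?_
    rw [integral_const_mul]
    have hchi0 : 0 ≤ ∫ x, (if δ - ε ≤ |x| ∧ |x| ≤ δ + ε then (1:ℝ) else 0) * gphi x :=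
      integral_nonneg (chi_nonneg δ ε)
    have hchi := chi_integral_le δ ε hε
    have hpsi0 : 0 ≤ ∫ y, gpsi y := integral_nonneg gpsi_nonneg
    have hpsi := gpsi_integral_le
    have hsle : Real.sqrt π ≤ π := by
      nlinarith [Real.sq_sqrt pi_pos.le, Real.sqrt_nonneg π, pi_gt_three,
        sq_nonneg (Real.sqrt π - 1)]
    have hstep : ((2 * π)⁻¹ * ∫ x, (if δ - ε ≤ |x| ∧ |x| ≤ δ + ε then (1:ℝ) else 0) * gphi x)
        * ∫ y, gpsi y ≤ ((2 * π)⁻¹ * (4 * ε)) * (4 * Real.sqrt π) := by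
      apply mul_le_mul _ hpsi hpsi0 (by positivity)
      exact mul_le_mul_of_nonneg_left hchi (by positivity)
    refine hstep.trans ?_
    have hπ : (0:ℝ) < π := pi_pos
    rw [show ((2 * π)⁻¹ * (4 * ε)) * (4 * Real.sqrt π) = 8 * ε * (Real.sqrt π / π) by
      field_simp; ring]
    have : Real.sqrt π / π ≤ 1 := (div_le_one hπ).2 hsle
    nlinarith [hε]
  calc ∫ z, oscg δ z ε ∂stdGauss2 ≤ ∫ z, B z ∂stdGauss2 := by
        apply integral_mono_of_nonneg
        · exact Filter.Eventually.of_forall fun z => oscg_nonneg δ ε hε z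
        · exact hBint
        · exact Filter.Eventually.of_forall fun z => oscg_le_B δ ε hε z
    _ = (∫ z, t1 z) + ∫ z, t2 z := hBeq
    _ ≤ 2 * ε + 8 * ε := by
        rw [hT1]
        exact add_le_add_right hT2 _
    _ = 10 * ε := by ring
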